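/- The one-half bound of the previous result is tight: there exists a society (with two communities, each containing one man and one woman), a strict preference profile, and a stable matching scheme σ* such that exactly half of all agents strictly prefer the partner they obtain in their own community to the partner they obtain in the fully integrated society, i.e. |{x ∈ M^S ∪ W^S : σ*(x, C_x) ≻_x σ*(x, S)}| = |M^S ∪ W^S| / 2. -/
import Mathlib


/-- A strict preference profile: each agent `x` has a strict total order over
agents of the opposite gender, and prefers any such partner to being unmatched
(i.e. to "obtaining" him/herself). `pref x a b` means `x` strictly prefers `a` to `b`. -/
structure Prefs (Agent : Type) (man : Agent → Bool) where
  pref : Agent → Agent → Agent → Prop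
  irrefl : ∀ x a, ¬ pref x a a
  trans : ∀ x a b c, pref x a b → pref x b c → pref x a c
  total : ∀ x a b, man a ≠ man x → man b ≠ man x → a ≠ b → pref x a b ∨ pref x b a
  worst : ∀ x a, man a ≠ man x → pref x a x

/-- `x` weakly prefers `a` to `b`. -/
def Prefs.weakPref {Agent : Type} {man : Agent → Bool} (P : Prefs Agent man)
    (x a b : Agent) : Prop := a = b ∨ P.pref x a b

/-- A matching on the set of agents `A`: a function of order two matching
men only to women (or to themselves, meaning unmatched), fixing agents outside `A`. -/
structure IsMatching {Agent : Type} (man : Agent → Bool) (A : Set Agent)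
    (μ : Agent → Agent) : Prop where
  mem : ∀ x ∈ A, μ x ∈ A
  invol : ∀ x ∈ A, μ (μ x) = x
  opp : ∀ x ∈ A, μ x ≠ x → man (μ x) ≠ man x
  fix : ∀ x ∉ A, μ x = x

/-- A matching is stable if there is no blocking pair: a man `m` and a woman `w`,
not married to each other, each strictly preferring the other to their own partner. -/
def IsStable {Agent : Type} {man : Agent → Bool} (P : Prefs Agent man)
    (A : Set Agent) (μ : Agent → Agent) : Prop :=
  IsMatching man A μ ∧
    ¬ ∃ m ∈ A, ∃ w ∈ A, man m ≠ man w ∧ μ m ≠ w ∧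
      P.pref m w (μ m) ∧ P.pref w m (μ w)

/-- A matching is Pareto optimal if no matching on the same agents makes every
agent weakly better off and some agent strictly better off. -/
def IsPareto {Agent : Type} {man : Agent → Bool} (P : Prefs Agent man)
    (A : Set Agent) (μ : Agent → Agent) : Prop :=
  IsMatching man A μ ∧
    ¬ ∃ μ' : Agent → Agent, IsMatching man A μ' ∧
      (∀ x ∈ A, P.weakPref x (μ' x) (μ x)) ∧
      ∃ y ∈ A, P.pref y (μ' y) (μ y)


section HalfBoundAux

private def man4 : Fin 4 → Bool := ![true, true, false, false]
private def comm4 : Fin 4 → Fin 2 := ![0, 1, 0, 1]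
private def fav4 : Fin 4 → Fin 4 := ![3, 2, 0, 1]
private def cross4 : Fin 4 → Fin 4 := ![3, 2, 1, 0]
private def within4 : Fin 4 → Fin 4 := ![2, 3, 0, 1]
private def rk4 (x a : Fin 4) : ℕ :=
  if a = fav4 x then 0 else if man4 a ≠ man4 x then 1 else 2

private def P4 : Prefs (Fin 4) man4 where
  pref x a b := rk4 x a < rk4 x b
  irrefl := by decide
  trans := fun _ _ _ _ => Nat.lt_trans
  total := by decide
  worst := by decide

private lemma P4_pref : P4.pref = fun x a b => rk4 x a < rk4 x b := rfl

open Classical in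
private noncomputable def sig4 (x : Fin 4) (Q : Set (Fin 2)) : Fin 4 :=
  if comm4 x ∈ Q then (if comm4 (cross4 x) ∈ Q then cross4 x else within4 x) else x

private lemma comm4_cases : ∀ x : Fin 4, comm4 x = 0 ∨ comm4 x = 1 := by decide

private lemma sig4_stable :
    ∀ Q : Set (Fin 2), IsStable P4 {x | comm4 x ∈ Q} (fun x => sig4 x Q) := by
  intro Q
  by_cases h0 : (0 : Fin 2) ∈ Q <;> by_cases h1 : (1 : Fin 2) ∈ Q
  · have hall : ∀ y : Fin 2, y ∈ Q := by intro y; fin_cases y <;> assumption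
    have hA : {x : Fin 4 | comm4 x ∈ Q} = Set.univ := by
      ext x; simp [hall]
    have hσ : (fun x => sig4 x Q) = cross4 := by
      funext x; simp [sig4, hall]
    rw [hA, hσ]
    refine ⟨⟨?_, ?_, ?_, ?_⟩, ?_⟩ <;>
      simp only [Set.mem_univ, true_and, forall_const, P4_pref] <;> decide
  · have hA : {x : Fin 4 | comm4 x ∈ Q} = {x | comm4 x = 0} := by
      ext x; simp only [Set.mem_setOf_eq]; constructor
      · intro h; rcases comm4_cases x with h' | h'
        · exact h'
        · rw [h'] at h; exact absurd h h1
      · intro h; rw [h]; exact h0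
    have hσ : (fun x => sig4 x Q) = ![2, 1, 0, 3] := by
      funext x; fin_cases x <;> simp [sig4, comm4, cross4, within4, h0, h1]
    rw [hA, hσ]
    refine ⟨⟨?_, ?_, ?_, ?_⟩, ?_⟩ <;>
      simp only [Set.mem_setOf_eq, P4_pref] <;> decide
  · have hA : {x : Fin 4 | comm4 x ∈ Q} = {x | comm4 x = 1} := by
      ext x; simp only [Set.mem_setOf_eq]; constructor
      · intro h; rcases comm4_cases x with h' | h'
        · rw [h'] at h; exact absurd h h0
        · exact h'
      · intro h; rw [h]; exact h1
    have hσ : (fun x => sig4 x Q) = ![0, 3, 2, 1] := by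
      funext x; fin_cases x <;> simp [sig4, comm4, cross4, within4, h0, h1]
    rw [hA, hσ]
    refine ⟨⟨?_, ?_, ?_, ?_⟩, ?_⟩ <;>
      simp only [Set.mem_setOf_eq, P4_pref] <;> decide
  · have hA : {x : Fin 4 | comm4 x ∈ Q} = ∅ := by
      ext x; simp only [Set.mem_setOf_eq, Set.mem_empty_iff_false, iff_false]
      rcases comm4_cases x with h' | h' <;> rw [h'] <;> assumption
    have hσ : (fun x => sig4 x Q) = fun x => x := by
      funext x
      have hx : comm4 x ∉ Q := by
        rcases comm4_cases x with h' | h' <;> rw [h'] <;> assumption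
      simp [sig4, hx]
    rw [hA, hσ]
    refine ⟨⟨?_, ?_, ?_, ?_⟩, ?_⟩ <;> simp

private lemma sig4_count :
    2 * Nat.card {x : Fin 4 // P4.pref x (sig4 x {comm4 x}) (sig4 x Set.univ)} =
      Fintype.card (Fin 4) := by
  have h1 : ∀ x, sig4 x {comm4 x} = within4 x := by
    intro x; fin_cases x <;> simp [sig4, comm4, cross4, within4]
  have h2 : ∀ x, sig4 x Set.univ = cross4 x := by
    intro x; simp [sig4]
  simp only [h1, h2, P4_pref]
  rw [Nat.card_eq_fintype_card]
  decide

end HalfBoundAux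

/-- **The one-half bound of Proposition 3 is tight.** There exists a society with
two pairwise disjoint communities (indexed by `Fin 2`), each containing exactly
one man and exactly one woman, a strict preference profile, and a stable matching
scheme `σ` such that exactly half of all agents strictly prefer the partner
obtained in their own community to the one obtained in the fully integrated
society. -/
theorem half_bound_is_tight :
    ∃ (man : Fin 4 → Bool) (comm : Fin 4 → Fin 2),
      (∀ i : Fin 2, ∃! x, comm x = i ∧ man x = true) ∧
      (∀ i : Fin 2, ∃! x, comm x = i ∧ man x = false) ∧
      ∃ (P : Prefs (Fin 4) man) (σ : Fin 4 → Set (Fin 2) → Fin 4),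
        (∀ Q : Set (Fin 2), IsStable P {x | comm x ∈ Q} (fun x => σ x Q)) ∧
        2 * Nat.card {x : Fin 4 // P.pref x (σ x {comm x}) (σ x Set.univ)} =
          Fintype.card (Fin 4) := by
  
  refine ⟨man4, comm4, ?_, ?_, P4, sig4, sig4_stable, sig4_count⟩
  · intro i; fin_cases i
    · exact ⟨0, by decide, by decide⟩
    · exact ⟨1, by decide, by decide⟩
  · intro i; fin_cases i
    · exact ⟨2, by decide, by decide⟩
    · exact ⟨3, by decide, by decide⟩
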